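/- Let R be an arithmetical ring such that every finitely generated R-module has finite Goldie dimension and such that R_P is coherent for every maximal ideal P. Then R is coherent. -/

import Mathlib

universe u

open CategoryTheory

/-- A commutative ring is *coherent* if every finitely generated ideal is finitely presented. -/
def IsCoherentRing (R : Type u) [CommRing R] : Prop :=
  ∀ I : Ideal R, I.FG → Module.FinitePresentation R I

/-- A commutative ring is *semicoherent* if for every pair of injective modules `E, F`,
the module `Hom_R(E, F)` is isomorphic to a submodule of a flat module. -/
def IsSemicoherentRing (R : Type u) [CommRing R] : Prop :=
  ∀ E F : ModuleCat.{u} R, Module.Injective R E → Module.Injective R F →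
    ∃ (M : ModuleCat.{u} R) (f : (E →ₗ[R] F) →ₗ[R] M),
      Module.Flat R M ∧ Function.Injective f

/-- A module `M` is *FP-injective* if `Ext¹_R(F, M) = 0` for every finitely presented
module `F`. -/
def IsFPInjective (R : Type u) [CommRing R] (M : Type u) [AddCommGroup M] [Module R M] : Prop :=
  ∀ F : ModuleCat.{u} R, Module.FinitePresentation R F →
    Subsingleton (((Ext R (ModuleCat.{u} R) 1).obj (Opposite.op F)).obj (ModuleCat.of R M))

/-- A commutative ring is an *IF-ring* if every injective module over it is flat. -/
def IsIFRing (R : Type u) [CommRing R] : Prop :=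
  ∀ M : ModuleCat.{u} R, Module.Injective R M → Module.Flat R M

/-- `f : M →ₗ[R] E` exhibits `E` as an injective hull (injective envelope) of `M`:
`E` is injective and `f` is an essential monomorphism. -/
def IsInjectiveHull (R : Type u) [CommRing R] (M : Type u) [AddCommGroup M] [Module R M]
    (E : Type u) [AddCommGroup E] [Module R E] (f : M →ₗ[R] E) : Prop :=
  Module.Injective R E ∧ Function.Injective f ∧
    ∀ N : Submodule R E, N ≠ ⊥ → N ⊓ LinearMap.range f ≠ ⊥

/-- A submodule is indecomposable if it is nonzero and is not the direct sum of two
nonzero submodules. -/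
def IsIndecomposableSubmodule {R : Type u} [CommRing R] {M : Type u} [AddCommGroup M]
    [Module R M] (N : Submodule R M) : Prop :=
  N ≠ ⊥ ∧ ∀ A B : Submodule R M, A ≤ N → B ≤ N → A ⊓ B = ⊥ → A ⊔ B = N → A = ⊥ ∨ B = ⊥

/-- A module has *finite Goldie dimension* if its injective hull is a finite direct sum
of indecomposable injective modules. -/
def HasFiniteGoldieDimension (R : Type u) [CommRing R] (M : Type u) [AddCommGroup M]
    [Module R M] : Prop :=
  ∃ (E : ModuleCat.{u} R) (f : M →ₗ[R] E) (n : ℕ) (N : Fin n → Submodule R E),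
    IsInjectiveHull R M E f ∧ iSupIndep N ∧ (⨆ i, N i) = ⊤ ∧
      ∀ i, IsIndecomposableSubmodule (N i) ∧ Module.Injective R (N i)

/-- A commutative ring is *arithmetical* if all its localizations at maximal ideals are
valuation rings, i.e. have totally ordered lattices of ideals. -/
def IsArithmeticalRing (R : Type u) [CommRing R] : Prop :=
  ∀ (P : Ideal R) [P.IsMaximal],
    ∀ I J : Ideal (Localization.AtPrime P), I ≤ J ∨ J ≤ I

/-- A module `M` is *finitely injective* if every homomorphism from a finitely generated
submodule `A` of an arbitrary module `B` into `M` extends to `B`. -/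
def IsFinitelyInjective (R : Type u) [CommRing R] (M : Type u) [AddCommGroup M]
    [Module R M] : Prop :=
  ∀ (B : ModuleCat.{u} R) (A : Submodule R B), A.FG →
    ∀ f : A →ₗ[R] M, ∃ g : (B : Type u) →ₗ[R] M, ∀ a : A, g a = f a

namespace ArithCoh

variable {R : Type u} [CommRing R]

section LocTools

variable (P : Ideal R) [P.IsMaximal]

/-- Localization of an ideal at a maximal ideal. -/
abbrev lz (I : Ideal R) : Ideal (Localization.AtPrime P) :=
  I.map (algebraMap R (Localization.AtPrime P))

theorem lz_inf (I J : Ideal R) : lz P (I ⊓ J) = lz P I ⊓ lz P J := by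
  refine le_antisymm (le_inf (Ideal.map_mono inf_le_left) (Ideal.map_mono inf_le_right)) ?_
  rintro z hz
  obtain ⟨hz1, hz2⟩ := Submodule.mem_inf.mp hz
  rw [IsLocalization.mem_map_algebraMap_iff P.primeCompl] at hz1 hz2 ⊢
  obtain ⟨⟨a, s⟩, ha⟩ := hz1
  obtain ⟨⟨b, t⟩, hb⟩ := hz2
  have key : algebraMap R (Localization.AtPrime P) ((a : R) * (t : R)) =
      algebraMap R (Localization.AtPrime P) ((b : R) * (s : R)) := by
    rw [map_mul, map_mul, ← ha, ← hb]; ring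
  obtain ⟨c, hc⟩ := (IsLocalization.eq_iff_exists P.primeCompl _).mp key
  have hmem : (c : R) * ((a : R) * (t : R)) ∈ I ⊓ J := by
    refine Submodule.mem_inf.mpr ⟨I.mul_mem_left _ (I.mul_mem_right _ a.2), ?_⟩
    rw [hc]
    exact J.mul_mem_left _ (J.mul_mem_right _ b.2)
  refine ⟨⟨⟨(c : R) * ((a : R) * (t : R)), hmem⟩, c * (s * t)⟩, ?_⟩
  simp only [Submonoid.coe_mul, map_mul]
  rw [← ha]
  ring

theorem exists_mul_mem_of_mem_lz {L : Ideal R} {y : R}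
    (h : algebraMap R (Localization.AtPrime P) y ∈ lz P L) :
    ∃ s : R, s ∉ P ∧ s * y ∈ L := by
  rw [← IsLocalization.mk'_one (M := P.primeCompl) (Localization.AtPrime P) y,
    IsLocalization.mk'_mem_map_algebraMap_iff P.primeCompl] at h
  obtain ⟨s, hs, hsy⟩ := h
  exact ⟨s, hs, hsy⟩

theorem lz_span_singleton (x : R) :
    lz P (Ideal.span {x}) = Ideal.span {algebraMap R (Localization.AtPrime P) x} := by
  show Ideal.map (algebraMap R (Localization.AtPrime P)) (Ideal.span {x}) = _
  rw [Ideal.map_span, Set.image_singleton]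

theorem lz_span_mul_unit {t x : R} (ht : t ∉ P) :
    lz P (Ideal.span {t * x}) = lz P (Ideal.span {x}) := by
  have hunit : IsUnit (algebraMap R (Localization.AtPrime P) t) :=
    IsLocalization.map_units (Localization.AtPrime P) (⟨t, ht⟩ : P.primeCompl)
  rw [lz_span_singleton, lz_span_singleton]
  refine le_antisymm ?_ ?_
  · rw [Ideal.span_singleton_le_span_singleton, map_mul]
    exact dvd_mul_left _ _
  · rw [Ideal.span_singleton_le_span_singleton, map_mul]
    obtain ⟨u, hu⟩ := hunit
    refine ⟨((u⁻¹ : _) : Localization.AtPrime P), ?_⟩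
    rw [← hu, mul_comm (↑u) (algebraMap R (Localization.AtPrime P) x), mul_assoc,
      Units.mul_inv, mul_one]

theorem finset_sup_le_or_bot {ι : Type*}
    (tot : ∀ A B : Ideal (Localization.AtPrime P), A ≤ B ∨ B ≤ A)
    (s : Finset ι) (F : ι → Ideal (Localization.AtPrime P)) :
    (∃ i ∈ s, s.sup F ≤ F i) ∨ s.sup F = ⊥ := by
  classical
  induction s using Finset.induction_on with
  | empty => right; simp
  | @insert a s ha ih =>
    rw [Finset.sup_insert]
    rcases ih with ⟨i, hi, hle⟩ | hbot
    · rcases tot (F a) (F i) with h | h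
      · exact Or.inl ⟨i, Finset.mem_insert_of_mem hi, sup_le h hle⟩
      · exact Or.inl ⟨a, Finset.mem_insert_self a s, sup_le le_rfl (hle.trans h)⟩
    · exact Or.inl ⟨a, Finset.mem_insert_self a s, by rw [hbot]; simp⟩

theorem lz_fg_exists_gen {J : Ideal R} (hfg : (lz P J).FG)
    (tot : ∀ A B : Ideal (Localization.AtPrime P), A ≤ B ∨ B ≤ A) :
    ∃ y ∈ J, lz P (Ideal.span {y}) = lz P J := by
  classical
  have key : ∀ z ∈ lz P J, ∃ a, a ∈ J ∧ z ∈ lz P (Ideal.span {a}) := by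
    intro z hz
    rw [IsLocalization.mem_map_algebraMap_iff P.primeCompl] at hz
    obtain ⟨⟨a, s⟩, ha⟩ := hz
    refine ⟨a, a.2, ?_⟩
    rw [lz_span_singleton, Ideal.mem_span_singleton]
    obtain ⟨u, hu⟩ := IsLocalization.map_units (Localization.AtPrime P) s
    refine ⟨((u⁻¹ : _) : Localization.AtPrime P), ?_⟩
    rw [← ha, ← hu, mul_assoc, Units.mul_inv, mul_one]
  obtain ⟨T, hT⟩ := hfg
  have hch : ∀ z : Localization.AtPrime P, ∃ a : R,
      z ∈ lz P J → a ∈ J ∧ z ∈ lz P (Ideal.span {a}) := by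
    intro z
    by_cases h : z ∈ lz P J
    · obtain ⟨a, h1, h2⟩ := key z h
      exact ⟨a, fun _ => ⟨h1, h2⟩⟩
    · exact ⟨0, fun h' => absurd h' h⟩
  choose g hg using hch
  have hTmem : ∀ z ∈ T, (z : Localization.AtPrime P) ∈ lz P J := by
    intro z hz
    rw [← hT]
    exact Ideal.subset_span hz
  have hle : lz P J ≤ T.sup fun z => lz P (Ideal.span {g z}) := by
    rw [← hT, Ideal.span_le]
    intro z hz
    exact SetLike.le_def.mp (Finset.le_sup (f := fun z => lz P (Ideal.span {g z})) hz) (hg z (hTmem z hz)).2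
  have hge : (T.sup fun z => lz P (Ideal.span {g z})) ≤ lz P J := by
    refine Finset.sup_le fun z hz => Ideal.map_mono ?_
    rw [Ideal.span_le, Set.singleton_subset_iff]
    exact (hg z (hTmem z hz)).1
  rcases finset_sup_le_or_bot P tot T (fun z => lz P (Ideal.span {g z})) with ⟨z, hzT, hsup⟩ | hbot
  · refine ⟨g z, (hg z (hTmem z hzT)).1, le_antisymm ?_ (hle.trans hsup)⟩
    exact (Finset.le_sup hzT).trans hge
  · refine ⟨0, J.zero_mem, ?_⟩
    have hJbot : lz P J = ⊥ := le_bot_iff.mp (hle.trans_eq hbot)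
    have h0 : lz P (Ideal.span {(0 : R)}) ≤ lz P J :=
      Ideal.map_mono (Ideal.span_le.mpr (by simp))
    rw [hJbot] at h0 ⊢
    exact le_bot_iff.mp h0

theorem lz_nak {J : Ideal R} (hne : lz P J ≠ ⊥) (hfg : (lz P J).FG) :
    ¬ lz P J ≤ lz P (P * J) := by
  intro hle
  apply hne
  have h2 : lz P P ≤ IsLocalRing.maximalIdeal (Localization.AtPrime P) := by
    rw [Ideal.map_le_iff_le_comap]
    intro p hp
    rw [Ideal.mem_comap]
    exact (IsLocalization.AtPrime.to_map_mem_maximal_iff _ P p).mpr hp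
  have hsmul : lz P J ≤ IsLocalRing.maximalIdeal (Localization.AtPrime P) • lz P J := by
    calc lz P J ≤ lz P (P * J) := hle
    _ = lz P P * lz P J := Ideal.map_mul _ P J
    _ ≤ IsLocalRing.maximalIdeal (Localization.AtPrime P) * lz P J :=
        Ideal.mul_mono h2 le_rfl
    _ = IsLocalRing.maximalIdeal (Localization.AtPrime P) • lz P J :=
        (Ideal.smul_eq_mul _ _).symm
  exact Submodule.eq_bot_of_le_smul_of_le_jacobson_bot _ _ hfg hsmul
    (IsLocalRing.jacobson_eq_maximalIdeal ⊥ bot_ne_top).ge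

end LocTools


section Uniform

variable {Q : Type u} [AddCommGroup Q] [Module R Q]

/-- Every submodule disjoint from `A` and containing `B` extends to a maximal one. -/
theorem exists_maximal_disjoint (B A : Submodule R Q) (h : B ⊓ A = ⊥) :
    ∃ C : Submodule R Q, B ≤ C ∧ C ⊓ A = ⊥ ∧
      ∀ C' : Submodule R Q, C ≤ C' → C' ⊓ A = ⊥ → C' = C := by
  have hchain : ∀ c ⊆ {C : Submodule R Q | C ⊓ A = ⊥}, IsChain (· ≤ ·) c →
      ∀ y ∈ c, ∃ ub ∈ {C : Submodule R Q | C ⊓ A = ⊥}, ∀ z ∈ c, z ≤ ub := by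
    intro c hcs hchain y hy
    refine ⟨sSup c, ?_, fun z hz => le_sSup hz⟩
    rw [Set.mem_setOf_eq, eq_bot_iff]
    rintro x ⟨hx1, hx2⟩
    obtain ⟨p, hp, hxp⟩ := (Submodule.mem_sSup_of_directed ⟨y, hy⟩
      hchain.directedOn).mp hx1
    have h2 := hcs hp
    rw [Set.mem_setOf_eq, eq_bot_iff] at h2
    exact h2 ⟨hxp, hx2⟩
  obtain ⟨C, hBC, hCmax⟩ := zorn_le_nonempty₀ {C : Submodule R Q | C ⊓ A = ⊥} hchain B h
  exact ⟨C, hBC, hCmax.prop, fun C' h1 h2 => le_antisymm (hCmax.le_of_ge h2 h1) h1⟩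

/-- An injective module with no nontrivial direct sum decomposition is uniform. -/
theorem uniform_of_injective_of_indecomposable (hinj : Module.Injective R Q)
    (hind : ∀ A B : Submodule R Q, A ⊓ B = ⊥ → A ⊔ B = ⊤ → A = ⊥ ∨ B = ⊥)
    (A B : Submodule R Q) (hAB : A ⊓ B = ⊥) (hA : A ≠ ⊥) (hB : B ≠ ⊥) : False := by
  classical
  -- C: maximal containing B and disjoint from A
  obtain ⟨C, hBC, hCA, hCmax⟩ := exists_maximal_disjoint B A (by rw [inf_comm]; exact hAB)
  -- D: maximal containing A and disjoint from C
  have hAC : A ⊓ C = ⊥ := by rw [inf_comm]; exact hCA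
  obtain ⟨D, hAD, hDC, hDmax⟩ := exists_maximal_disjoint A C hAC
  -- inside D ⊔ C, the D-part and C-part are complementary
  set V : Submodule R Q := D ⊔ C with hV
  set D' : Submodule R (↥V) := D.comap V.subtype with hD'
  set C' : Submodule R (↥V) := C.comap V.subtype with hC'
  have hcompl : IsCompl D' C' := by
    constructor
    · rw [disjoint_iff, eq_bot_iff]
      rintro x ⟨hx1, hx2⟩
      have hmem : (x : Q) ∈ D ⊓ C := ⟨hx1, hx2⟩
      rw [hDC] at hmem
      exact (Submodule.mem_bot _).mpr (Subtype.ext ((Submodule.mem_bot R).mp hmem))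
    · rw [codisjoint_iff, eq_top_iff]
      rintro x -
      obtain ⟨d, hd, c, hc, hdc⟩ := Submodule.mem_sup.mp x.2
      have hdV : d ∈ V := Submodule.mem_sup_left hd
      have hcV : c ∈ V := Submodule.mem_sup_right hc
      refine Submodule.mem_sup.mpr ⟨⟨d, hdV⟩, hd, ⟨c, hcV⟩, hc, ?_⟩
      exact Subtype.ext hdc
  -- the projection onto the D-part, valued in Q
  set g : ↥V →ₗ[R] Q :=
    V.subtype.comp (D'.subtype.comp (Submodule.linearProjOfIsCompl D' C' hcompl)) with hg
  have hgD : ∀ x : ↥V, (x : Q) ∈ D → g x = (x : Q) := by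
    intro x hx
    have h1 : Submodule.linearProjOfIsCompl D' C' hcompl x = ⟨x, hx⟩ :=
      Submodule.linearProjOfIsCompl_apply_left hcompl (⟨x, hx⟩ : D')
    simp [hg, h1]
  have hgC : ∀ x : ↥V, (x : Q) ∈ C → g x = 0 := by
    intro x hx
    have h1 : Submodule.linearProjOfIsCompl D' C' hcompl x = 0 :=
      Submodule.linearProjOfIsCompl_apply_right hcompl (⟨x, hx⟩ : C')
    simp [hg, h1]
  -- extend g along the inclusion V ↪ Q using injectivity
  obtain ⟨h, hh⟩ := hinj.out V.subtype (Submodule.injective_subtype V) g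
  have hhD : ∀ x : Q, x ∈ D → h x = x := by
    intro x hx
    have := hh ⟨x, le_sup_left (α := Submodule R Q) hx⟩
    rw [Submodule.subtype_apply] at this
    rw [this, hgD _ hx]
  have hhC : ∀ x : Q, x ∈ C → h x = 0 := by
    intro x hx
    have := hh ⟨x, le_sup_right (α := Submodule R Q) hx⟩
    rw [Submodule.subtype_apply] at this
    rw [this, hgC _ hx]
  -- the kernel of h is exactly C
  have hkerA : LinearMap.ker h ⊓ A = ⊥ := by
    rw [eq_bot_iff]
    intro x hx
    obtain ⟨hx1, hx2⟩ := Submodule.mem_inf.mp hx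
    have hxD : x ∈ D := hAD hx2
    rw [LinearMap.mem_ker] at hx1
    rw [Submodule.mem_bot, ← hhD x hxD, hx1]
  have hCker : C ≤ LinearMap.ker h := fun x hx => LinearMap.mem_ker.mpr (hhC x hx)
  have hker : LinearMap.ker h = C := hCmax _ hCker hkerA
  -- every nonzero element of the range has a multiple in A \ {0}
  have hessA : ∀ x : Q, h x ≠ 0 → ∃ r : R, r • h x ∈ A ∧ r • h x ≠ 0 := by
    intro x hzx
    have hxC : x ∉ C := fun hxC => hzx (hhC x hxC)
    have hne : (C ⊔ Submodule.span R {x}) ⊓ A ≠ ⊥ := by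
      intro hbot
      have heq := hCmax _ le_sup_left hbot
      exact hxC (heq ▸ (le_sup_right (α := Submodule R Q))
        (Submodule.mem_span_singleton_self x))
    obtain ⟨a, ha, hane⟩ := Submodule.exists_mem_ne_zero_of_ne_bot hne
    obtain ⟨ha1, ha2⟩ := ha
    obtain ⟨c, hc, y, hy, hcy⟩ := Submodule.mem_sup.mp ha1
    obtain ⟨r, rfl⟩ := Submodule.mem_span_singleton.mp hy
    have hha : h a = a := hhD a (hAD ha2)
    have hcalc : h a = r • h x := by
      rw [← hcy, map_add, hhC c hc, zero_add, map_smul]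
    refine ⟨r, ?_, ?_⟩
    · rw [← hcalc, hha]; exact ha2
    · rw [← hcalc, hha]; exact hane
  -- range h = D
  have hrangeC : LinearMap.range h ⊓ C = ⊥ := by
    rw [eq_bot_iff]
    intro z hz
    obtain ⟨hz1, hzC⟩ := Submodule.mem_inf.mp hz
    obtain ⟨x, rfl⟩ := hz1
    rw [Submodule.mem_bot]
    by_contra hz
    obtain ⟨r, hrA, hrne⟩ := hessA x hz
    have hmem : r • h x ∈ A ⊓ C := ⟨hrA, C.smul_mem r hzC⟩
    rw [hAC, Submodule.mem_bot] at hmem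
    exact hrne hmem
  have hDrange : D ≤ LinearMap.range h := fun x hx => ⟨x, hhD x hx⟩
  have hrange : LinearMap.range h = D := hDmax _ hDrange hrangeC
  -- D and C decompose Q
  have hsupTop : D ⊔ C = ⊤ := by
    rw [eq_top_iff]
    rintro x -
    have h1 : h x ∈ D := hrange ▸ LinearMap.mem_range_self h x
    have h2 : x - h x ∈ C := by
      rw [← hker, LinearMap.mem_ker, map_sub, hhD _ h1, sub_self]
    have hx : x = h x + (x - h x) := by abel
    exact hx ▸ Submodule.mem_sup.mpr ⟨h x, h1, x - h x, h2, rfl⟩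
  rcases hind D C hDC hsupTop with hD0 | hC0
  · exact hA (eq_bot_iff.mpr (hD0 ▸ hAD))
  · exact hB (eq_bot_iff.mpr (hC0 ▸ hBC))

end Uniform

section Sequence

variable {R : Type u} [CommRing R]

/-- A good pair: a maximal ideal together with a local generator of `J` at it. -/
def GoodPair (J : Ideal R) (p : R × Ideal R) : Prop :=
  p.2.IsMaximal ∧ p.1 ∈ J ∧
    ∀ hm : p.2.IsMaximal,
      haveI := hm
      lz p.2 (Ideal.span {p.1}) = lz p.2 J ∧ lz p.2 J ≠ ⊥

/-- The relation between successive pairs in the construction. -/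
def RelPair (J : Ideal R) (x y : R × Ideal R) : Prop :=
  y.1 ∈ x.2 * J ∧
    ∀ hmy : y.2.IsMaximal,
      haveI := hmy
      ¬ lz y.2 J ≤ lz y.2 (Ideal.span {x.1})

theorem step_lemma {J : Ideal R} (hnfg : ¬ J.FG)
    (harith : ∀ (P : Ideal R) [P.IsMaximal],
      ∀ I K : Ideal (Localization.AtPrime P), I ≤ K ∨ K ≤ I)
    (hJloc : ∀ (P : Ideal R) [P.IsMaximal], (lz P J).FG)
    (s : Finset (R × Ideal R)) (hs : ∀ x ∈ s, GoodPair J x) :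
    ∃ y, GoodPair J y ∧ ∀ x ∈ s, RelPair J x y := by
  classical
  -- global choice of local generators of J
  have hgen : ∀ P : Ideal R, ∃ gP : R, ∀ hm : P.IsMaximal,
      haveI := hm
      gP ∈ J ∧ lz P (Ideal.span {gP}) = lz P J := by
    intro P
    by_cases hm : P.IsMaximal
    · haveI := hm
      obtain ⟨yy, hy1, hy2⟩ := lz_fg_exists_gen P (hJloc P) (harith P)
      exact ⟨yy, fun _ => ⟨hy1, hy2⟩⟩
    · exact ⟨0, fun h => absurd h hm⟩
  choose g hgspec using hgen
  set D : Ideal R := Ideal.span ↑(s.image Prod.fst) with hD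
  have hDJ : D ≤ J := by
    rw [hD, Ideal.span_le]
    intro x hx
    rw [Finset.coe_image] at hx
    obtain ⟨p, hp, rfl⟩ := hx
    exact (hs p hp).2.1
  -- find a fresh maximal ideal where D and J differ locally
  have hPnew : ∃ P : Ideal R, ∃ hm : P.IsMaximal, P ∉ s.image Prod.snd ∧
      (haveI := hm; lz P D ≠ lz P J) := by
    by_contra hcon
    push_neg at hcon
    apply hnfg
    have hJeq : J = D ⊔ Ideal.span ↑((s.image Prod.snd).image g) := by
      apply Ideal.eq_of_localization_maximal
      intro P hP
      haveI := hP
      apply le_antisymm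
      · by_cases hPs : P ∈ s.image Prod.snd
        · have hgP := (hgspec P hP).2
          calc Ideal.map (algebraMap R (Localization.AtPrime P)) J
              = lz P (Ideal.span {g P}) := hgP.symm
            _ ≤ _ := by
              apply Ideal.map_mono
              refine le_trans ?_ le_sup_right
              apply Ideal.span_mono
              rw [Set.singleton_subset_iff, Finset.coe_image]
              exact Set.mem_image_of_mem g hPs
        · have hDP := hcon P hP hPs
          calc Ideal.map (algebraMap R (Localization.AtPrime P)) J
              = lz P D := hDP.symm
            _ ≤ _ := Ideal.map_mono le_sup_left
      · apply Ideal.map_mono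
        apply sup_le hDJ
        rw [Ideal.span_le]
        intro x hx
        rw [Finset.coe_image] at hx
        obtain ⟨Q, hQ, rfl⟩ := hx
        rw [Finset.mem_coe, Finset.mem_image] at hQ
        obtain ⟨p, hp, rfl⟩ := hQ
        exact (hgspec p.2 (hs p hp).1).1
    rw [hJeq]
    exact Submodule.FG.sup (Submodule.fg_span (Finset.finite_toSet _))
      (Submodule.fg_span (Finset.finite_toSet _))
  obtain ⟨Pn, hPn, hPnotin, hPneq⟩ := hPnew
  haveI := hPn
  have hxnJ : g Pn ∈ J := (hgspec Pn hPn).1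
  have hxngen : lz Pn (Ideal.span {g Pn}) = lz Pn J := (hgspec Pn hPn).2
  -- elements in the old maximal ideals avoiding the new one
  have hu : ∀ p : R × Ideal R, ∃ up : R, p ∈ s → up ∈ p.2 ∧ up ∉ Pn := by
    intro p
    by_cases hp : p ∈ s
    · have hmax : p.2.IsMaximal := (hs p hp).1
      have hne2 : ¬ p.2 ≤ Pn := by
        intro hle
        have heq : p.2 = Pn := hmax.eq_of_le hPn.ne_top hle
        exact hPnotin (heq ▸ Finset.mem_image_of_mem Prod.snd hp)
      obtain ⟨up, hu1, hu2⟩ := SetLike.not_le_iff_exists.mp hne2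
      exact ⟨up, fun _ => ⟨hu1, hu2⟩⟩
    · exact ⟨1, fun h => absurd h hp⟩
  choose uf huspec using hu
  have htPn : (∏ p ∈ s, uf p) ∉ Pn := by
    intro hmem
    obtain ⟨p, hp, hup⟩ := Ideal.IsPrime.prod_mem_iff.mp hmem
    exact (huspec p hp).2 hup
  have htp : ∀ p ∈ s, (∏ q ∈ s, uf q) ∈ p.2 := by
    intro p hp
    obtain ⟨c, hc⟩ := Finset.dvd_prod_of_mem uf hp
    rw [hc]
    exact Ideal.mul_mem_right _ _ (huspec p hp).1
  refine ⟨((∏ p ∈ s, uf p) * g Pn, Pn), ⟨hPn, J.mul_mem_left _ hxnJ, fun hm => ⟨?_, ?_⟩⟩, ?_⟩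
  · rw [lz_span_mul_unit Pn htPn]
    exact hxngen
  · intro hbot
    refine hPneq ?_
    have hle : lz Pn D ≤ lz Pn J := Ideal.map_mono hDJ
    rw [hbot] at hle
    rw [hbot]
    exact le_bot_iff.mp hle
  · intro p hp
    refine ⟨Ideal.mul_mem_mul (htp p hp) hxnJ, fun hmy => ?_⟩
    intro hle
    refine hPneq (le_antisymm (Ideal.map_mono hDJ) ?_)
    calc Ideal.map (algebraMap R (Localization.AtPrime Pn)) J
        ≤ lz Pn (Ideal.span {p.1}) := hle
      _ ≤ lz Pn D := by
          apply Ideal.map_mono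
          apply Ideal.span_mono
          rw [Set.singleton_subset_iff, Finset.coe_image]
          exact Set.mem_image_of_mem Prod.fst hp

theorem fg_of_locally_fg
    (harith : ∀ (P : Ideal R) [P.IsMaximal],
      ∀ I K : Ideal (Localization.AtPrime P), I ≤ K ∨ K ≤ I)
    (hgoldie : ∀ L : Ideal R, ∀ A : ℕ → R, (∀ k, A k ∉ L) →
      (∀ j k : ℕ, j ≠ k →
        L.colon (Ideal.span {A j}) ⊔ L.colon (Ideal.span {A k}) = ⊤) → False)
    (J : Ideal R)
    (hJloc : ∀ (P : Ideal R) [P.IsMaximal], (lz P J).FG) : J.FG := by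
  classical
  by_contra hnfg
  obtain ⟨f, hgood, hrel⟩ := exists_seq_of_forall_finset_exists (GoodPair J) (RelPair J)
    (step_lemma hnfg harith hJloc)
  set y : ℕ → R := fun k => (f k).1 with hy
  set Pk : ℕ → Ideal R := fun k => (f k).2 with hPk
  set L : Ideal R :=
    ⨆ k : ℕ, (Ideal.span {y k} ⊓ ⨆ i : {i : ℕ // i ≠ k}, Ideal.span {y i.1}) with hL
  have hterm : ∀ k : ℕ,
      (Ideal.span {y k} ⊓ ⨆ i : {i : ℕ // i ≠ k}, Ideal.span {y i.1}) ≤ L :=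
    fun k => le_iSup (fun k => (Ideal.span {y k} ⊓ ⨆ i : {i : ℕ // i ≠ k}, Ideal.span {y i.1})) k
  -- C1 : y k ∉ L
  have hC1 : ∀ k, y k ∉ L := by
    intro k hyL
    haveI hm : (Pk k).IsMaximal := (hgood k).1
    obtain ⟨hgen, hnebot⟩ := (hgood k).2.2 hm
    set G1 : Ideal (Localization.AtPrime (Pk k)) :=
      (Finset.range k).sup (fun i => lz (Pk k) (Ideal.span {y i})) with hG1
    set G2 : Ideal (Localization.AtPrime (Pk k)) := lz (Pk k) (Pk k * J) with hG2
    -- every span {y i} for i ≠ k localizes into G1 ⊔ G2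
    have hspan_le : ∀ i : ℕ, i ≠ k → lz (Pk k) (Ideal.span {y i}) ≤ G1 ⊔ G2 := by
      intro i hik
      rcases lt_or_gt_of_ne hik with hlt | hgt
      · exact le_trans (Finset.le_sup (f := fun i => lz (Pk k) (Ideal.span {y i}))
          (Finset.mem_range.mpr hlt)) le_sup_left
      · -- i > k : y i ∈ Pk k * J
        have hmem : y i ∈ Pk k * J := (hrel k i hgt).1
        refine le_trans (Ideal.map_mono ?_) le_sup_right
        rw [Ideal.span_le, Set.singleton_subset_iff]
        exact hmem
    have hLle : lz (Pk k) L ≤ G1 ⊔ G2 := by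
      rw [hL]
      refine le_trans (le_of_eq (Ideal.map_iSup _ _)) (iSup_le ?_)
      intro j
      by_cases hjk : j = k
      · subst hjk
        refine le_trans (Ideal.map_mono inf_le_right) ?_
        refine le_trans (le_of_eq (Ideal.map_iSup _ _)) (iSup_le ?_)
        rintro ⟨i, hik⟩
        exact hspan_le i hik
      · exact le_trans (Ideal.map_mono inf_le_left) (hspan_le j hjk)
    have hJle : lz (Pk k) J ≤ G1 ⊔ G2 := by
      rw [← hgen]
      refine le_trans ?_ hLle
      apply Ideal.map_mono
      rw [Ideal.span_le, Set.singleton_subset_iff]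
      exact hyL
    have hJfg : (lz (Pk k) J).FG := hJloc (Pk k)
    rcases harith (Pk k) G1 G2 with h12 | h21
    · -- lz J ≤ G2 = lz (Pk k * J) : Nakayama
      have : lz (Pk k) J ≤ lz (Pk k) (Pk k * J) := le_trans hJle (sup_le h12 le_rfl)
      exact lz_nak (Pk k) hnebot hJfg this
    · -- lz J ≤ G1 : a finite sup of strictly smaller ideals
      have hJG1 : lz (Pk k) J ≤ G1 := le_trans hJle (sup_le le_rfl h21)
      rcases finset_sup_le_or_bot (Pk k) (harith (Pk k)) (Finset.range k)
          (fun i => lz (Pk k) (Ideal.span {y i})) with ⟨i, hi, hsup⟩ | hbot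
      · exact (hrel i k (Finset.mem_range.mp hi)).2 hm (le_trans hJG1 hsup)
      · rw [hG1, hbot] at hJG1
        exact hnebot (le_bot_iff.mp hJG1)
  -- C2 : pairwise comaximal annihilators
  have hC2 : ∀ j k : ℕ, j ≠ k →
      L.colon (Ideal.span {y j}) ⊔ L.colon (Ideal.span {y k}) = ⊤ := by
    intro j k hjk
    by_contra hne
    obtain ⟨Q, hQmax, hQ⟩ := Ideal.exists_le_maximal _ hne
    haveI := hQmax
    have hcolj : L.colon (Ideal.span {y j}) ≤ Q := le_trans le_sup_left hQ
    have hcolk : L.colon (Ideal.span {y k}) ≤ Q := le_trans le_sup_right hQ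
    have hnotle : ∀ m : ℕ, L.colon (Ideal.span {y m}) ≤ Q →
        ¬ lz Q (Ideal.span {y m}) ≤ lz Q L := by
      intro m hcol hle
      have hym : algebraMap R (Localization.AtPrime Q) (y m) ∈ lz Q L := by
        apply hle
        exact Ideal.mem_map_of_mem _ (Ideal.subset_span rfl)
      obtain ⟨sq, hsq, hsy⟩ := exists_mul_mem_of_mem_lz Q hym
      exact hsq (hcol (Ideal.mem_colon_span_singleton.mpr hsy))
    -- helper : span {y m} ⊓ span {y m'} localizes into L for m ≠ m'
    have hinfL : ∀ m m' : ℕ, m ≠ m' →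
        lz Q (Ideal.span {y m}) ⊓ lz Q (Ideal.span {y m'}) ≤ lz Q L := by
      intro m m' hmm
      rw [← lz_inf]
      refine le_trans (Ideal.map_mono ?_) (Ideal.map_mono (hterm m))
      refine inf_le_inf_left _ ?_
      exact le_iSup (fun i : {i : ℕ // i ≠ m} => Ideal.span {y i.1}) ⟨m', Ne.symm hmm⟩
    have hLj : lz Q L ≤ lz Q (Ideal.span {y j}) := by
      rcases harith Q (lz Q (Ideal.span {y j})) (lz Q L) with h | h
      · exact absurd h (hnotle j hcolj)
      · exact h
    have hLk : lz Q L ≤ lz Q (Ideal.span {y k}) := by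
      rcases harith Q (lz Q (Ideal.span {y k})) (lz Q L) with h | h
      · exact absurd h (hnotle k hcolk)
      · exact h
    rcases harith Q (lz Q (Ideal.span {y j})) (lz Q (Ideal.span {y k})) with h | h
    · exact (hnotle j hcolj) (le_trans (le_inf le_rfl h) (hinfL j k hjk))
    · exact (hnotle k hcolk) (le_trans (le_inf le_rfl h) (hinfL k j (Ne.symm hjk)))
  exact hgoldie L y hC1 hC2

end Sequence

theorem goldie_contradiction
    (hb : ∀ M : ModuleCat.{u} R, Module.Finite R M → HasFiniteGoldieDimension R M)
    (L : Ideal R) (A : ℕ → R) (h1 : ∀ k, A k ∉ L)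
    (h2 : ∀ j k : ℕ, j ≠ k →
      L.colon (Ideal.span {A j}) ⊔ L.colon (Ideal.span {A k}) = ⊤) :
    False := by
  classical
  have hfin : Module.Finite R (ModuleCat.of R (R ⧸ L)) :=
    (inferInstance : Module.Finite R (R ⧸ L))
  obtain ⟨E, fE, n, N, hhull, hindep, hsup, hNi⟩ := hb (ModuleCat.of R (R ⧸ L)) hfin
  obtain ⟨hEinj, hfinj, hess⟩ := hhull
  set a : ℕ → (R ⧸ L) := fun k => Submodule.Quotient.mk (A k) with ha
  have hane : ∀ k, a k ≠ 0 := fun k h => h1 k ((Submodule.Quotient.mk_eq_zero L).mp h)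
  set b : ℕ → E := fun k => fE (a k) with hbdef
  have hbne : ∀ k, b k ≠ 0 := by
    intro k h
    exact hane k (hfinj (by rw [map_zero]; exact h))
  have hannb : ∀ k r, r ∈ L.colon (Ideal.span {A k}) → r • b k = 0 := by
    intro k r hr
    have hra : r • a k = 0 := by
      rw [ha]
      show r • Submodule.Quotient.mk (A k) = 0
      rw [← Submodule.Quotient.mk_smul, Submodule.Quotient.mk_eq_zero]
      have : r * A k ∈ L := Ideal.mem_colon_span_singleton.mp hr
      simpa [smul_eq_mul] using this
    show r • fE (a k) = 0
    rw [← map_smul, hra, map_zero]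
  have hinternal : DirectSum.IsInternal N :=
    DirectSum.isInternal_submodule_of_iSupIndep_of_iSup_eq_top hindep hsup
  set e : DirectSum (Fin n) (fun i => ↥(N i)) ≃ₗ[R] E :=
    LinearEquiv.ofBijective (DirectSum.coeLinearMap N) hinternal with he
  set prj : ∀ i : Fin n, E →ₗ[R] ↥(N i) := fun i =>
    (DirectSum.component R (Fin n) (fun i => ↥(N i)) i).comp e.symm.toLinearMap with hprj
  have hdecomp : ∀ x : E, (∀ i, prj i x = 0) → x = 0 := by
    intro x hx
    have h0 : e.symm x = 0 := by
      refine DFunLike.ext _ _ fun i => ?_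
      have hxi := hx i
      rw [hprj] at hxi
      exact hxi
    have := congrArg e h0
    rw [LinearEquiv.apply_symm_apply, map_zero] at this
    exact this
  have hchoice : ∀ k, ∃ i, prj i (b k) ≠ 0 := by
    intro k
    by_contra hcon
    push_neg at hcon
    exact hbne k (hdecomp _ hcon)
  choose ci hci using hchoice
  obtain ⟨k, j, hkj, hcikj⟩ := Finite.exists_ne_map_eq_of_infinite ci
  set z : ↥(N (ci k)) := prj (ci k) (b k) with hz0
  have hzne : z ≠ 0 := hci k
  set w : ↥(N (ci k)) := prj (ci k) (b j) with hw0
  have hwne : w ≠ 0 := by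
    rw [hw0, hcikj]
    exact hci j
  have hone : (1 : R) ∈ L.colon (Ideal.span {A k}) ⊔ L.colon (Ideal.span {A j}) := by
    rw [h2 k j hkj]; trivial
  obtain ⟨p, hp, q, hq, hpq⟩ := Submodule.mem_sup.mp hone
  have hpz : p • z = 0 := by
    rw [hz0, ← map_smul, hannb k p hp, map_zero]
  have hqw : q • w = 0 := by
    rw [hw0, ← map_smul, hannb j q hq, map_zero]
  have hXY : (Submodule.span R {z}) ⊓ (Submodule.span R {w}) = ⊥ := by
    rw [eq_bot_iff]
    intro v hv
    obtain ⟨hvX, hvY⟩ := Submodule.mem_inf.mp hv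
    obtain ⟨r, rfl⟩ := Submodule.mem_span_singleton.mp hvX
    obtain ⟨s', hs'⟩ := Submodule.mem_span_singleton.mp hvY
    rw [Submodule.mem_bot]
    calc r • z = (p + q) • (r • z) := by rw [hpq, one_smul]
      _ = p • (r • z) + q • (r • z) := add_smul p q _
      _ = r • (p • z) + q • (s' • w) := by rw [smul_comm p r z, hs']
      _ = 0 := by rw [hpz, smul_comm q s' w, hqw, smul_zero, smul_zero, add_zero]
  refine uniform_of_injective_of_indecomposable ((hNi (ci k)).2) ?_
    (Submodule.span R {z}) (Submodule.span R {w}) hXY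
    (fun h => hzne (Submodule.span_singleton_eq_bot.mp h))
    (fun h => hwne (Submodule.span_singleton_eq_bot.mp h))
  intro A' B' hAB' hsup'
  have hmapinf : (A'.map (N (ci k)).subtype) ⊓ (B'.map (N (ci k)).subtype) = ⊥ := by
    rw [← Submodule.map_inf _ (Submodule.injective_subtype _), hAB', Submodule.map_bot]
  have hmapsup : (A'.map (N (ci k)).subtype) ⊔ (B'.map (N (ci k)).subtype) = N (ci k) := by
    rw [← Submodule.map_sup, hsup', Submodule.map_subtype_top]
  rcases (hNi (ci k)).1.2 _ _ (Submodule.map_subtype_le _ _) (Submodule.map_subtype_le _ _)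
      hmapinf hmapsup with h | h
  · left
    have := congrArg (Submodule.comap (N (ci k)).subtype) h
    rwa [Submodule.comap_map_eq_of_injective (Submodule.injective_subtype _), Submodule.comap_bot,
      Submodule.ker_subtype] at this
  · right
    have := congrArg (Submodule.comap (N (ci k)).subtype) h
    rwa [Submodule.comap_map_eq_of_injective (Submodule.injective_subtype _), Submodule.comap_bot,
      Submodule.ker_subtype] at this


theorem fp_prod {M N : Type u} [AddCommGroup M] [Module R M] [AddCommGroup N] [Module R N]
    [hM : Module.FinitePresentation R M] [hN : Module.FinitePresentation R N] :
    Module.FinitePresentation R (M × N) := by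
  obtain ⟨m, fm, hfm⟩ := Module.Finite.exists_fin' R M
  obtain ⟨k, fk, hfk⟩ := Module.Finite.exists_fin' R N
  have hsurj : Function.Surjective (fm.prodMap fk) := hfm.prodMap hfk
  apply Module.finitePresentation_of_free_of_surjective (fm.prodMap fk) hsurj
  rw [LinearMap.ker_prodMap]
  exact Submodule.FG.prod (Module.FinitePresentation.fg_ker fm hfm)
    (Module.FinitePresentation.fg_ker fk hfk)

/-- A principal ideal is finitely presented iff the annihilator of the generator is f.g. -/
theorem fp_span_of_ker_fg {S : Type u} [CommRing S] (x : S)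
    (hker : (LinearMap.ker (LinearMap.toSpanSingleton S S x)).FG) :
    Module.FinitePresentation S ↥(Ideal.span {x}) := by
  have hmem : ∀ r : S, LinearMap.toSpanSingleton S S x r ∈ Ideal.span {x} := by
    intro r
    rw [Ideal.mem_span_singleton]
    exact Dvd.intro_left r (by rw [LinearMap.toSpanSingleton_apply, smul_eq_mul])
  set l : S →ₗ[S] ↥(Ideal.span {x}) :=
    (LinearMap.toSpanSingleton S S x).codRestrict _ hmem with hl
  have hsurj : Function.Surjective l := by
    rintro ⟨v, hv⟩
    rw [Ideal.mem_span_singleton] at hv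
    obtain ⟨c, rfl⟩ := hv
    exact ⟨c, Subtype.ext (by simp [hl, LinearMap.toSpanSingleton_apply, smul_eq_mul, mul_comm])⟩
  apply Module.finitePresentation_of_surjective l hsurj
  rwa [hl, LinearMap.ker_codRestrict]

theorem ker_fg_of_fp_span {S : Type u} [CommRing S] (x : S)
    (hfp : Module.FinitePresentation S ↥(Ideal.span {x})) :
    (LinearMap.ker (LinearMap.toSpanSingleton S S x)).FG := by
  have hmem : ∀ r : S, LinearMap.toSpanSingleton S S x r ∈ Ideal.span {x} := by
    intro r
    rw [Ideal.mem_span_singleton]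
    exact Dvd.intro_left r (by rw [LinearMap.toSpanSingleton_apply, smul_eq_mul])
  set l : S →ₗ[S] ↥(Ideal.span {x}) :=
    (LinearMap.toSpanSingleton S S x).codRestrict _ hmem with hl
  have hsurj : Function.Surjective l := by
    rintro ⟨v, hv⟩
    rw [Ideal.mem_span_singleton] at hv
    obtain ⟨c, rfl⟩ := hv
    exact ⟨c, Subtype.ext (by simp [hl, LinearMap.toSpanSingleton_apply, smul_eq_mul, mul_comm])⟩
  haveI := hfp
  have := Module.FinitePresentation.fg_ker l hsurj
  rwa [hl, LinearMap.ker_codRestrict] at this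

/-- localization of the annihilator of an element. -/
theorem lz_ann (P : Ideal R) [P.IsMaximal] (x : R) :
    lz P (LinearMap.ker (LinearMap.toSpanSingleton R R x)) =
      LinearMap.ker (LinearMap.toSpanSingleton (Localization.AtPrime P)
        (Localization.AtPrime P) (algebraMap R (Localization.AtPrime P) x)) := by
  show Ideal.map (algebraMap R (Localization.AtPrime P))
      (LinearMap.ker (LinearMap.toSpanSingleton R R x)) = _
  apply le_antisymm
  · rw [Ideal.map_le_iff_le_comap]
    intro r hr
    rw [LinearMap.mem_ker, LinearMap.toSpanSingleton_apply, smul_eq_mul] at hr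
    rw [Ideal.mem_comap, LinearMap.mem_ker, LinearMap.toSpanSingleton_apply, smul_eq_mul,
      ← map_mul, hr, map_zero]
  · intro ρ hρ
    rw [LinearMap.mem_ker, LinearMap.toSpanSingleton_apply, smul_eq_mul] at hρ
    obtain ⟨r, s, rfl⟩ := IsLocalization.exists_mk'_eq (M := P.primeCompl) (S := Localization.AtPrime P) (z := ρ)
    have hrx : algebraMap R (Localization.AtPrime P) (r * x) = 0 := by
      rw [map_mul, ← IsLocalization.mk'_spec' (Localization.AtPrime P) r s, mul_assoc, hρ,
        mul_zero]
    rw [← map_zero (algebraMap R (Localization.AtPrime P))] at hrx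
    obtain ⟨c, hc⟩ := (IsLocalization.eq_iff_exists P.primeCompl _).mp hrx
    rw [mul_zero] at hc
    have hcr : (c : R) * r ∈ LinearMap.ker (LinearMap.toSpanSingleton R R x) := by
      rw [LinearMap.mem_ker, LinearMap.toSpanSingleton_apply, smul_eq_mul, mul_assoc]
      exact hc
    have hmk : IsLocalization.mk' (Localization.AtPrime P) r s =
        IsLocalization.mk' (Localization.AtPrime P) (r * (c : R)) (s * c) :=
      (IsLocalization.mk'_cancel r s c).symm
    rw [hmk, IsLocalization.mk'_eq_mul_mk'_one]
    refine Ideal.mul_mem_right _ _ (Ideal.mem_map_of_mem _ ?_)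
    rw [mul_comm]
    exact hcr


theorem fp_sup {I1 I2 : Ideal R} (h1 : Module.FinitePresentation R ↥I1)
    (h2 : Module.FinitePresentation R ↥I2) (hinf : (I1 ⊓ I2).FG) :
    Module.FinitePresentation R ↥(I1 ⊔ I2) := by
  haveI := h1
  haveI := h2
  haveI : Module.FinitePresentation R (↥I1 × ↥I2) := fp_prod
  set l : (↥I1 × ↥I2) →ₗ[R] ↥(I1 ⊔ I2) :=
    LinearMap.coprod (Submodule.inclusion le_sup_left)
      (Submodule.inclusion le_sup_right) with hl
  have hsurj : Function.Surjective l := by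
    rintro ⟨v, hv⟩
    obtain ⟨x1, hx1, x2, hx2, hxz⟩ := Submodule.mem_sup.mp hv
    refine ⟨(⟨x1, hx1⟩, ⟨x2, hx2⟩), Subtype.ext ?_⟩
    simpa [hl, Submodule.inclusion] using hxz
  apply Module.finitePresentation_of_surjective l hsurj
  set s : ↥(I1 ⊓ I2) →ₗ[R] ↥I1 × ↥I2 :=
    LinearMap.prod (Submodule.inclusion inf_le_left)
      (-(Submodule.inclusion inf_le_right)) with hs
  have hker : LinearMap.ker l = LinearMap.range s := by
    ext v
    simp only [LinearMap.mem_ker, LinearMap.mem_range]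
    constructor
    · intro hv
      obtain ⟨v1, v2⟩ := v
      have hval : (v1 : R) + (v2 : R) = 0 := by
        have hcoe := congrArg Subtype.val hv
        simpa [hl, Submodule.inclusion] using hcoe
      have hv1' : (v1 : R) ∈ I2 := by
        rw [eq_neg_of_add_eq_zero_left hval]
        exact I2.neg_mem v2.2
      refine ⟨⟨(v1 : R), ⟨v1.2, hv1'⟩⟩, ?_⟩
      refine Prod.ext (Subtype.ext rfl) (Subtype.ext ?_)
      show -((v1 : R)) = (v2 : R)
      rw [eq_neg_of_add_eq_zero_left hval, neg_neg]
    · rintro ⟨uu, rfl⟩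
      apply Subtype.ext
      show ((uu : R)) + ((-(uu : R))) = 0
      ring
  rw [hker, LinearMap.range_eq_map]
  exact Submodule.FG.map _ ((Submodule.fg_top _).mpr hinf)


end ArithCoh

/-- Let `R` be an arithmetical ring such that every finitely generated `R`-module has
finite Goldie dimension and `R_P` is coherent for every maximal ideal `P`. Then `R` is
coherent. -/
theorem arithmetical_coherent_of_localizations_coherent (R : Type u) [CommRing R]
    (harith : IsArithmeticalRing R)
    (hb : ∀ M : ModuleCat.{u} R, Module.Finite R M → HasFiniteGoldieDimension R M)
    (hloc : ∀ (P : Ideal R) [P.IsMaximal], IsCoherentRing (Localization.AtPrime P)) :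
    IsCoherentRing R := by
  classical
  intro I hI
  have harith' : ∀ (P : Ideal R) [P.IsMaximal],
      ∀ A B : Ideal (Localization.AtPrime P), A ≤ B ∨ B ≤ A := fun P _ => harith P
  have hgold : ∀ L : Ideal R, ∀ A : ℕ → R, (∀ k, A k ∉ L) →
      (∀ j k : ℕ, j ≠ k →
        L.colon (Ideal.span {A j}) ⊔ L.colon (Ideal.span {A k}) = ⊤) → False :=
    fun L A hA1 hA2 => ArithCoh.goldie_contradiction hb L A hA1 hA2
  refine Submodule.fg_induction (motive := fun J _ => Module.FinitePresentation R ↥J) ?_ ?_ I hI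
  · intro x
    show Module.FinitePresentation R ↥(Ideal.span {x})
    apply ArithCoh.fp_span_of_ker_fg
    apply ArithCoh.fg_of_locally_fg harith' hgold
    intro P hP
    rw [ArithCoh.lz_ann P x]
    exact ArithCoh.ker_fg_of_fp_span _ (hloc P _ (Submodule.fg_span_singleton _))
  · intro I1 I2 _ _ h1 h2
    haveI := h1
    haveI := h2
    have hfg1 : I1.FG := (Submodule.fg_top I1).mp (Module.finite_def.mp inferInstance)
    have hfg2 : I2.FG := (Submodule.fg_top I2).mp (Module.finite_def.mp inferInstance)
    have hinf : (I1 ⊓ I2).FG := by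
      apply ArithCoh.fg_of_locally_fg harith' hgold
      intro P hP
      rw [ArithCoh.lz_inf P I1 I2]
      rcases harith' P (ArithCoh.lz P I1) (ArithCoh.lz P I2) with h | h
      · rw [inf_eq_left.mpr h]
        exact Ideal.FG.map hfg1 _
      · rw [inf_eq_right.mpr h]
        exact Ideal.FG.map hfg2 _
    exact ArithCoh.fp_sup h1 h2 hinf
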